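/- Let (X, ρ, μ) be a separable metric probability space and γ > 0. Then there exists a function t_γ : ℕ → ℝ₊ with t_γ(n)/n → 0 as n → ∞ such that, for X_1, …, X_n drawn i.i.d. from μ, P[ sup over all γ-nets N of {X_1, …, X_n} of 2|N| ≥ t_γ(n) ] ≤ 1/n². -/

import Mathlib

open MeasureTheory Filter Metric
open scoped ENNReal

lemma gns_key_real (n sN : ℕ) (δ : ℝ) (hn : 1 ≤ n) (hδ0 : 0 ≤ δ)
    (hs1 : (n : ℝ) * Real.sqrt δ ≤ sN) (hs2 : 4 * Real.log n ≤ sN) (hs0 : 1 ≤ sN)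
    (hsmall : Real.sqrt δ ≤ 1 / (2 * Real.exp 1)) :
    (n.choose sN : ℝ) * δ ^ sN * (n : ℝ) ^ 2 ≤ 1 := by
  rcases hδ0.eq_or_lt with h | hδpos
  · have : δ ^ sN = 0 := by rw [← h]; exact zero_pow (by omega)
    simp [this]
  set e := Real.exp 1 with he
  have hepos : 0 < e := Real.exp_pos 1
  have hsNpos : (0 : ℝ) < sN := by exact_mod_cast hs0
  have hnpos : (0 : ℝ) < n := by exact_mod_cast hn
  have hfacpos : (0 : ℝ) < (sN.factorial : ℝ) := by exact_mod_cast sN.factorial_pos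
  have hc : (n.choose sN : ℝ) ≤ (n : ℝ) ^ sN / sN.factorial := by
    exact_mod_cast Nat.choose_le_pow_div sN n
  have hexp : Real.exp (sN : ℝ) = e ^ sN := by
    rw [he, ← Real.exp_nat_mul, mul_one]
  have hfac : ((sN : ℝ)) ^ sN / (sN.factorial : ℝ) ≤ e ^ sN := by
    rw [← hexp]; exact Real.pow_div_factorial_le_exp (x := (sN:ℝ)) (by positivity) sN
  have hinv : (1 : ℝ) / sN.factorial ≤ e ^ sN / (sN : ℝ) ^ sN := by
    rw [div_le_div_iff₀ hfacpos (by positivity)]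
    rw [div_le_iff₀ hfacpos] at hfac
    linarith [hfac]
  have hhalf : (n : ℝ) * e * δ / sN ≤ 1 / 2 := by
    have hsq : Real.sqrt δ * Real.sqrt δ = δ := Real.mul_self_sqrt hδ0
    have h1 : (n : ℝ) * Real.sqrt δ / sN ≤ 1 := by
      rw [div_le_one hsNpos]; simpa using hs1
    have h2 : e * Real.sqrt δ ≤ 1 / 2 := by
      have := mul_le_mul_of_nonneg_left hsmall hepos.le
      calc e * Real.sqrt δ ≤ e * (1 / (2 * e)) := this
        _ = 1 / 2 := by field_simp
    have hrw : (n : ℝ) * e * δ / sN = ((n : ℝ) * Real.sqrt δ / sN) * (e * Real.sqrt δ) := by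
      have h3 : ((n : ℝ) * Real.sqrt δ / sN) * (e * Real.sqrt δ)
          = (n : ℝ) * e * (Real.sqrt δ * Real.sqrt δ) / sN := by ring
      rw [h3, hsq]
    rw [hrw]
    calc ((n : ℝ) * Real.sqrt δ / sN) * (e * Real.sqrt δ) ≤ 1 * (1 / 2) := by
          apply mul_le_mul h1 h2 (by positivity) (by norm_num)
      _ = 1 / 2 := by norm_num
  have hlogn : 0 ≤ Real.log n := Real.log_nonneg (by exact_mod_cast hn)
  have h2n : ((n : ℝ)) ^ 2 ≤ 2 ^ sN := by
    have e1 : ((n : ℝ)) ^ 2 = Real.exp (2 * Real.log n) := by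
      rw [show (2 : ℝ) * Real.log n = (2 : ℕ) * Real.log n by norm_num,
        Real.exp_nat_mul, Real.exp_log hnpos]
    have e2 : (2 : ℝ) ^ sN = Real.exp ((sN : ℝ) * Real.log 2) := by
      rw [Real.exp_nat_mul, Real.exp_log two_pos]
    rw [e1, e2]
    apply Real.exp_le_exp.2
    nlinarith [Real.log_two_gt_d9, hs2, hlogn]
  calc (n.choose sN : ℝ) * δ ^ sN * (n : ℝ) ^ 2
      ≤ ((n : ℝ) ^ sN / sN.factorial) * δ ^ sN * (n : ℝ) ^ 2 := by
        apply mul_le_mul_of_nonneg_right (mul_le_mul_of_nonneg_right hc (by positivity))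
          (by positivity)
    _ = ((n : ℝ) ^ sN * δ ^ sN) * (1 / sN.factorial) * (n : ℝ) ^ 2 := by ring
    _ ≤ ((n : ℝ) ^ sN * δ ^ sN) * (e ^ sN / (sN : ℝ) ^ sN) * (n : ℝ) ^ 2 := by
        apply mul_le_mul_of_nonneg_right (mul_le_mul_of_nonneg_left hinv (by positivity))
          (by positivity)
    _ = ((n : ℝ) * e * δ / sN) ^ sN * (n : ℝ) ^ 2 := by
        rw [div_pow, mul_pow, mul_pow]; ring
    _ ≤ (1 / 2) ^ sN * (n : ℝ) ^ 2 := by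
        apply mul_le_mul_of_nonneg_right (pow_le_pow_left₀ (by positivity) hhalf sN)
          (by positivity)
    _ ≤ (1 / 2) ^ sN * (2 : ℝ) ^ sN := by
        apply mul_le_mul_of_nonneg_left h2n (by positivity)
    _ = 1 := by rw [← mul_pow]; norm_num

/-- card of a finset inside the range of `ω : Fin n → X` is at most `n`. -/
lemma gns_card_le {X : Type*} [DecidableEq X] {n : ℕ} {ω : Fin n → X} {N : Finset X}
    (h : ↑N ⊆ Set.range ω) : N.card ≤ n := by
  calc N.card ≤ (Finset.univ.image ω).card := by
        apply Finset.card_le_card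
        intro a ha
        obtain ⟨i, hi⟩ := h ha
        exact Finset.mem_image.2 ⟨i, Finset.mem_univ i, hi⟩
    _ ≤ (Finset.univ : Finset (Fin n)).card := Finset.card_image_le
    _ = n := by simp

theorem gamma_net_sublinear {X : Type*} [MetricSpace X] [MeasurableSpace X] [BorelSpace X]
    (μ : Measure X) [IsProbabilityMeasure μ]
    (hsep : ∃ X' : Set X, MeasurableSet X' ∧ μ X' = 1 ∧ TopologicalSpace.IsSeparable X')
    (γ : ℝ) (hγ : 0 < γ) :
    ∃ t : ℕ → ℝ, (∀ n, 0 < t n) ∧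
      Tendsto (fun n : ℕ => t n / n) atTop (nhds 0) ∧
      ∀ n : ℕ,
        (Measure.pi fun _ : Fin n => μ)
            {ω : Fin n → X | ∃ N : Finset X,
              (↑N ⊆ Set.range ω) ∧
              (∀ a ∈ N, ∀ b ∈ N, a ≠ b → γ ≤ dist a b) ∧
              (∀ x ∈ Set.range ω, ∃ a ∈ N, dist x a < γ) ∧
              t n ≤ 2 * (N.card : ℝ)}
          ≤ 1 / (n : ℝ≥0∞) ^ 2 := by
  classical
  obtain ⟨X', hX'm, hX'1, hX'sep⟩ := hsep
  obtain ⟨c, hc_cnt, hc_cl⟩ := hX'sep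
  have hX'ne : X'.Nonempty := by
    rcases Set.eq_empty_or_nonempty X' with h | h
    · exfalso; rw [h] at hX'1; simp at hX'1
    · exact h
  have hcne : c.Nonempty := by
    obtain ⟨x, hx⟩ := hX'ne
    exact closure_nonempty_iff.mp ⟨x, hc_cl hx⟩
  obtain ⟨f, hf⟩ := Set.Countable.exists_eq_range hc_cnt hcne
  set B : ℕ → Set X := fun k => ball (f k) (γ / 2) with hB
  have hcover : ∀ x ∈ X', ∃ k, x ∈ B k := by
    intro x hx
    have hx' := hc_cl hx
    rw [Metric.mem_closure_iff] at hx'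
    obtain ⟨b, hb, hdb⟩ := hx' (γ / 2) (by linarith)
    rw [hf] at hb; obtain ⟨k, rfl⟩ := hb
    exact ⟨k, by simpa [hB, mem_ball] using hdb⟩
  set E : ℕ → Set X := fun K => X' \ ⋃ k ∈ Finset.range K, B k with hE
  have hEm : ∀ K, MeasurableSet (E K) := fun K =>
    hX'm.diff (MeasurableSet.biUnion (Finset.range K).countable_toSet
      fun k _ => isOpen_ball.measurableSet)
  have hEanti : Antitone E := by
    intro K L h
    apply Set.diff_subset_diff_right
    intro x hx
    simp only [Set.mem_iUnion, Finset.mem_range, exists_prop] at hx ⊢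
    obtain ⟨k, hkK, hxk⟩ := hx
    exact ⟨k, by omega, hxk⟩
  have hEinter : ⋂ K, E K = ∅ := by
    ext x
    simp only [Set.mem_iInter, Set.mem_empty_iff_false, iff_false, not_forall]
    by_contra h
    push_neg at h
    obtain ⟨k, hk⟩ := hcover x (h 0).1
    refine (h (k + 1)).2 ?_
    simp only [Set.mem_iUnion, Finset.mem_range, exists_prop]
    exact ⟨k, by omega, hk⟩
  have hEtend : Tendsto (fun K => μ (E K)) atTop (nhds 0) := by
    have h := tendsto_measure_iInter_atTop (μ := μ) (fun K => (hEm K).nullMeasurableSet)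
      hEanti ⟨0, measure_ne_top μ _⟩
    rw [hEinter, measure_empty] at h
    exact h
  have hsqrt_tend : Tendsto Nat.sqrt atTop atTop :=
    Filter.tendsto_atTop_atTop_of_monotone (fun _ _ h => Nat.sqrt_le_sqrt h)
      (fun b => ⟨b ^ 2, le_of_eq (Nat.sqrt_eq' b).symm⟩)
  set δ : ℕ → ℝ := fun n => (μ (E (Nat.sqrt n))).toReal with hδ
  have hδ0 : ∀ n, 0 ≤ δ n := fun n => ENNReal.toReal_nonneg
  have hδtend : Tendsto δ atTop (nhds 0) := by
    have h1 : Tendsto (fun K => (μ (E K)).toReal) atTop (nhds 0) := by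
      have := (ENNReal.tendsto_toReal (by simp : (0 : ℝ≥0∞) ≠ ⊤)).comp hEtend
      exact this
    exact h1.comp hsqrt_tend
  have hsd : Tendsto (fun n => Real.sqrt (δ n)) atTop (nhds 0) := by
    have := (Real.continuous_sqrt.tendsto 0).comp hδtend
    rw [Real.sqrt_zero] at this
    exact this
  set s : ℕ → ℕ := fun n => max ⌈(n : ℝ) * Real.sqrt (δ n)⌉₊ ⌈4 * Real.log n⌉₊ + 1 with hs
  set good : ℕ → Prop := fun n => Real.sqrt (δ n) ≤ 1 / (2 * Real.exp 1) with hgood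
  set t : ℕ → ℝ := fun n =>
    if good n then 2 * ((Nat.sqrt n : ℝ) + s n) else 2 * n + 2 with ht
  have hspos : ∀ n, 1 ≤ s n := fun n => Nat.le_add_left 1 _
  refine ⟨t, ?_, ?_, ?_⟩
  · -- positivity
    intro n
    rcases em (good n) with h | h
    · have h1 : (1 : ℝ) ≤ (s n : ℝ) := by exact_mod_cast hspos n
      have : t n = 2 * ((Nat.sqrt n : ℝ) + s n) := by simp only [ht, if_pos h]
      rw [this]; positivity
    · have : t n = 2 * n + 2 := by simp only [ht, if_neg h]
      rw [this]; positivity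
  · -- tendsto
    have hev : ∀ᶠ n in atTop, good n := by
      have hpos : (0 : ℝ) < 1 / (2 * Real.exp 1) := by positivity
      exact hsd.eventually_le_const hpos
    -- upper bound function
    have hKn : Tendsto (fun n : ℕ => ((Nat.sqrt n : ℝ))⁻¹) atTop (nhds 0) :=
      ((tendsto_natCast_atTop_atTop (R := ℝ)).comp hsqrt_tend).inv_tendsto_atTop
    have hlog : Tendsto (fun n : ℕ => Real.log n / n) atTop (nhds 0) :=
      (Real.isLittleO_log_id_atTop.tendsto_div_nhds_zero).comp tendsto_natCast_atTop_atTop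
    have hconst : ∀ c : ℝ, Tendsto (fun n : ℕ => c / n) atTop (nhds 0) := fun c =>
      tendsto_const_div_atTop_nhds_zero_nat c
    have hg : Tendsto (fun n : ℕ =>
        2 * ((Nat.sqrt n : ℝ))⁻¹ + 2 * Real.sqrt (δ n) + (8 * (Real.log n / n) + 6 / n))
        atTop (nhds 0) := by
      have := (((hKn.const_mul 2).add (hsd.const_mul 2)).add
        ((hlog.const_mul 8).add (hconst 6)))
      simpa using this
    apply tendsto_of_tendsto_of_tendsto_of_le_of_le' tendsto_const_nhds hg
    · -- eventually 0 ≤ t n / n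
      filter_upwards [eventually_ge_atTop 1] with n hn
      have hn' : (0 : ℝ) < n := by exact_mod_cast hn
      have htpos : 0 < t n := by
        rcases em (good n) with h | h
        · have h1 : (1 : ℝ) ≤ (s n : ℝ) := by exact_mod_cast hspos n
          have : t n = 2 * ((Nat.sqrt n : ℝ) + s n) := by simp only [ht, if_pos h]
          rw [this]; positivity
        · have : t n = 2 * n + 2 := by simp only [ht, if_neg h]
          rw [this]; positivity
      positivity
    · -- eventually t n / n ≤ g n
      filter_upwards [hev, eventually_ge_atTop 1] with n hgn hn1
      have hn' : (0 : ℝ) < n := by exact_mod_cast hn1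
      have hKpos : (1 : ℕ) ≤ Nat.sqrt n := by
        rw [Nat.one_le_iff_ne_zero, Ne, Nat.sqrt_eq_zero]
        omega
      have hKpos' : (0 : ℝ) < (Nat.sqrt n : ℝ) := by exact_mod_cast hKpos
      have hlogn : 0 ≤ Real.log n := Real.log_nonneg (by exact_mod_cast hn1)
      have hsb : (s n : ℝ) ≤ (n : ℝ) * Real.sqrt (δ n) + 4 * Real.log n + 3 := by
      -- s n = max a b + 1 ≤ a + b + 1, a ≤ n√δ+1, b ≤ 4logn+1
        have ha : (⌈(n : ℝ) * Real.sqrt (δ n)⌉₊ : ℝ) ≤ (n : ℝ) * Real.sqrt (δ n) + 1 :=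
          (Nat.ceil_lt_add_one (by positivity)).le
        have hb2 : (⌈4 * Real.log n⌉₊ : ℝ) ≤ 4 * Real.log n + 1 :=
          (Nat.ceil_lt_add_one (by positivity)).le
        have hmax : (max ⌈(n : ℝ) * Real.sqrt (δ n)⌉₊ ⌈4 * Real.log n⌉₊ : ℝ)
            ≤ (n : ℝ) * Real.sqrt (δ n) + 4 * Real.log n + 2 := by
          apply max_le
          · nlinarith [Real.sqrt_nonneg (δ n), hn'.le]
          · nlinarith [Real.sqrt_nonneg (δ n), hn'.le]
        have : (s n : ℝ) = (max ⌈(n : ℝ) * Real.sqrt (δ n)⌉₊ ⌈4 * Real.log n⌉₊ : ℝ) + 1 := by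
          simp only [hs]
          push_cast
          ring
        rw [this]
        linarith
      have hKdiv : (Nat.sqrt n : ℝ) / n ≤ ((Nat.sqrt n : ℝ))⁻¹ := by
        rw [div_le_iff₀ hn', inv_mul_eq_div, le_div_iff₀ hKpos']
        exact_mod_cast Nat.sqrt_le n
      have htn : t n = 2 * ((Nat.sqrt n : ℝ) + s n) := by simp [ht, hgn]
      rw [htn]
      rw [div_le_iff₀ hn']
      have expand : (2 * ((Nat.sqrt n : ℝ))⁻¹ + 2 * Real.sqrt (δ n)
          + (8 * (Real.log n / n) + 6 / n)) * n
          = 2 * (((Nat.sqrt n : ℝ))⁻¹ * n) + 2 * Real.sqrt (δ n) * n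
            + 8 * Real.log n + 6 := by
        field_simp
        ring
      rw [expand]
      have h1 : (Nat.sqrt n : ℝ) ≤ ((Nat.sqrt n : ℝ))⁻¹ * n := by
        calc (Nat.sqrt n : ℝ) = ((Nat.sqrt n : ℝ) / n) * n := by field_simp
          _ ≤ ((Nat.sqrt n : ℝ))⁻¹ * n := mul_le_mul_of_nonneg_right hKdiv hn'.le
      nlinarith [hsb, h1, Real.sqrt_nonneg (δ n), hn'.le]
  · -- main bound
    intro n
    by_cases hn0 : n = 0
    · subst hn0; simp
    by_cases hn1 : n = 1
    · subst hn1
      have h1 : (1 / ((1 : ℕ) : ℝ≥0∞) ^ 2) = 1 := by norm_num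
      rw [h1]
      exact prob_le_one
    have hn2 : 2 ≤ n := by omega
    by_cases hgn : good n
    · -- main case
      have htn : t n = 2 * ((Nat.sqrt n : ℝ) + s n) := by simp only [ht, if_pos hgn]
      set EK : Set X := E (Nat.sqrt n) with hEK
      set Bad : Set (Fin n → X) := ⋃ i : Fin n, {ω : Fin n → X | ω i ∈ X'ᶜ} with hBad
      set A' : Set (Fin n → X) :=
        {ω : Fin n → X | s n ≤ (Finset.univ.filter fun i => ω i ∈ EK).card} with hA'
      have hincl : {ω : Fin n → X | ∃ N : Finset X,
            (↑N ⊆ Set.range ω) ∧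
            (∀ a ∈ N, ∀ b ∈ N, a ≠ b → γ ≤ dist a b) ∧
            (∀ x ∈ Set.range ω, ∃ a ∈ N, dist x a < γ) ∧
            t n ≤ 2 * (N.card : ℝ)} ⊆ Bad ∪ A' := by
        rintro ω ⟨N, hNsub, hNsep, -, hNcard⟩
        by_cases hb : ∃ i, ω i ∈ X'ᶜ
        · left
          obtain ⟨i, hi⟩ := hb
          exact Set.mem_iUnion.2 ⟨i, hi⟩
        · right
          push_neg at hb
          have hball : ∀ i, ω i ∈ X' := by
            intro i
            have := hb i
            simpa using this
          set N₁ := N.filter (fun a => ∃ k, k < Nat.sqrt n ∧ a ∈ B k) with hN₁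
          set N₂ := N.filter (fun a => a ∈ EK) with hN₂
          have hNsplit : N ⊆ N₁ ∪ N₂ := by
            intro a ha
            have haX : a ∈ X' := by
              obtain ⟨i, hi⟩ := hNsub ha
              rw [← hi]; exact hball i
            by_cases hk : ∃ k, k < Nat.sqrt n ∧ a ∈ B k
            · exact Finset.mem_union_left _ (Finset.mem_filter.2 ⟨ha, hk⟩)
            · refine Finset.mem_union_right _ (Finset.mem_filter.2 ⟨ha, ?_⟩)
              refine ⟨haX, ?_⟩
              intro hmem
              simp only [Set.mem_iUnion, Finset.mem_range, exists_prop] at hmem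
              exact hk hmem
          have hcard1 : N₁.card ≤ Nat.sqrt n := by
            have hmaps : ∀ a ∈ N₁,
                (if h : ∃ k, k < Nat.sqrt n ∧ a ∈ B k then Nat.find h else 0)
                  ∈ Finset.range (Nat.sqrt n) := by
              intro a ha
              obtain ⟨-, h⟩ := Finset.mem_filter.1 ha
              rw [dif_pos h, Finset.mem_range]
              exact (Nat.find_spec h).1
            have hinj : Set.InjOn
                (fun a => if h : ∃ k, k < Nat.sqrt n ∧ a ∈ B k then Nat.find h else 0)
                ↑N₁ := by
              intro a ha b hb' hab
              obtain ⟨haN, hha⟩ := Finset.mem_filter.1 (Finset.mem_coe.1 ha)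
              obtain ⟨hbN, hhb⟩ := Finset.mem_filter.1 (Finset.mem_coe.1 hb')
              simp only [dif_pos hha, dif_pos hhb] at hab
              by_contra hne
              have hsep' := hNsep a haN b hbN hne
              have h1 := (Nat.find_spec hha).2
              have h2 := (Nat.find_spec hhb).2
              rw [hab] at h1
              simp only [hB, mem_ball] at h1 h2
              have htri := (dist_triangle_right a b _).trans_lt (add_lt_add h1 h2)
              linarith
            have := Finset.card_le_card_of_injOn _ hmaps hinj
            simpa using this
          have hcard2 : N₂.card ≤ (Finset.univ.filter fun i => ω i ∈ EK).card := by
            have h0n : 0 < n := by omega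
            have hmaps : ∀ a ∈ N₂,
                (if h : ∃ i, ω i = a then h.choose else (⟨0, h0n⟩ : Fin n))
                  ∈ Finset.univ.filter fun i => ω i ∈ EK := by
              intro a ha
              obtain ⟨haN, haE⟩ := Finset.mem_filter.1 ha
              have hr : ∃ i, ω i = a := hNsub haN
              rw [dif_pos hr, Finset.mem_filter]
              exact ⟨Finset.mem_univ _, by rw [hr.choose_spec]; exact haE⟩
            have hinj : Set.InjOn
                (fun a => if h : ∃ i, ω i = a then h.choose else (⟨0, h0n⟩ : Fin n)) ↑N₂ := by
              intro a ha b hb' hab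
              have hra : ∃ i, ω i = a := hNsub (Finset.mem_filter.1 (Finset.mem_coe.1 ha)).1
              have hrb : ∃ i, ω i = b := hNsub (Finset.mem_filter.1 (Finset.mem_coe.1 hb')).1
              simp only [dif_pos hra, dif_pos hrb] at hab
              rw [← hra.choose_spec, ← hrb.choose_spec, hab]
            exact Finset.card_le_card_of_injOn _ hmaps hinj
          have hKs : Nat.sqrt n + s n ≤ N.card := by
            rw [htn] at hNcard
            have h3 : (Nat.sqrt n : ℝ) + (s n : ℝ) ≤ (N.card : ℝ) := by linarith
            exact_mod_cast h3
          have hN12 := (Finset.card_le_card hNsplit).trans (Finset.card_union_le N₁ N₂)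
          have hcount : s n ≤ (Finset.univ.filter fun i => ω i ∈ EK).card := by omega
          exact hcount
      have hBad0 : (Measure.pi fun _ : Fin n => μ) Bad = 0 := by
        rw [hBad]
        apply measure_iUnion_null
        intro i
        have hset : {ω : Fin n → X | ω i ∈ X'ᶜ}
            = Set.pi Set.univ (Function.update (fun _ : Fin n => (Set.univ : Set X)) i X'ᶜ) := by
          ext ω
          simp only [Set.mem_setOf_eq, Set.mem_pi, Set.mem_univ, forall_true_left]
          constructor
          · intro h j
            rcases eq_or_ne j i with rfl | hne
            · rw [Function.update_self]; exact h
            · rw [Function.update_of_ne hne]; trivial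
          · intro h
            have := h i
            rwa [Function.update_self] at this
        rw [hset, Measure.pi_pi]
        apply Finset.prod_eq_zero (Finset.mem_univ i)
        rw [Function.update_self]
        rw [measure_compl hX'm (measure_ne_top _ _), hX'1, measure_univ, tsub_self]
      have hA'bound : (Measure.pi fun _ : Fin n => μ) A'
          ≤ (n.choose (s n) : ℝ≥0∞) * (μ EK) ^ (s n) := by
        have hsubU : A' ⊆ ⋃ S ∈ Finset.powersetCard (s n) (Finset.univ : Finset (Fin n)),
            Set.pi Set.univ (fun i => if i ∈ S then EK else Set.univ) := by
          intro ω hω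
          obtain ⟨S, hS, hcardS⟩ := Finset.exists_subset_card_eq hω
          refine Set.mem_biUnion (Finset.mem_powersetCard.2 ⟨Finset.subset_univ _, hcardS⟩) ?_
          intro i _
          show ω i ∈ (if i ∈ S then EK else Set.univ)
          split_ifs with hi
          · exact (Finset.mem_filter.1 (hS hi)).2
          · trivial
        refine le_trans (measure_mono hsubU) (le_trans (measure_biUnion_finset_le _ _) ?_)
        have heach : ∀ S ∈ Finset.powersetCard (s n) (Finset.univ : Finset (Fin n)),
            (Measure.pi fun _ : Fin n => μ)
              (Set.pi Set.univ (fun i => if i ∈ S then EK else Set.univ))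
            = (μ EK) ^ (s n) := by
          intro S hS
          rw [Measure.pi_pi]
          have hμ : ∀ i : Fin n, μ (if i ∈ S then EK else Set.univ)
              = if i ∈ S then μ EK else 1 := by
            intro i; split_ifs <;> simp
          rw [Finset.prod_congr rfl (fun i _ => hμ i), Finset.prod_ite_mem,
            Finset.univ_inter, Finset.prod_const, (Finset.mem_powersetCard.1 hS).2]
        rw [Finset.sum_congr rfl heach, Finset.sum_const, Finset.card_powersetCard,
          Finset.card_univ, Fintype.card_fin, nsmul_eq_mul]
      have hfinal : (n.choose (s n) : ℝ≥0∞) * (μ EK) ^ (s n) ≤ 1 / (n : ℝ≥0∞) ^ 2 := by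
        have hnn0 : ((n : ℝ≥0∞)) ^ 2 ≠ 0 :=
          pow_ne_zero _ (Nat.cast_ne_zero.2 (by omega))
        have hnnt : ((n : ℝ≥0∞)) ^ 2 ≠ ⊤ :=
          ENNReal.pow_ne_top (ENNReal.natCast_ne_top n)
        rw [ENNReal.le_div_iff_mul_le (Or.inl hnn0) (Or.inl hnnt)]
        have hrw : (n.choose (s n) : ℝ≥0∞) * (μ EK) ^ (s n) * ((n : ℝ≥0∞)) ^ 2
            = ENNReal.ofReal ((n.choose (s n) : ℝ) * (δ n) ^ (s n) * (n : ℝ) ^ 2) := by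
          rw [ENNReal.ofReal_mul (mul_nonneg (Nat.cast_nonneg _) (pow_nonneg (hδ0 n) _)),
            ENNReal.ofReal_mul (Nat.cast_nonneg _),
            ENNReal.ofReal_pow (hδ0 n), ENNReal.ofReal_pow (Nat.cast_nonneg n),
            ENNReal.ofReal_natCast, ENNReal.ofReal_natCast]
          have hδn : ENNReal.ofReal (δ n) = μ EK := by
            simp only [hδ]
            rw [ENNReal.ofReal_toReal (measure_ne_top _ _)]
          rw [hδn]
        rw [hrw]
        have hkey : (n.choose (s n) : ℝ) * (δ n) ^ (s n) * (n : ℝ) ^ 2 ≤ 1 := by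
          apply gns_key_real n (s n) (δ n) (by omega) (hδ0 n)
          · calc (n : ℝ) * Real.sqrt (δ n) ≤ (⌈(n : ℝ) * Real.sqrt (δ n)⌉₊ : ℝ) :=
                Nat.le_ceil _
              _ ≤ ((s n : ℕ) : ℝ) := by
                have : ⌈(n : ℝ) * Real.sqrt (δ n)⌉₊ ≤ s n := by
                  simp only [hs]
                  exact Nat.le_succ_of_le (le_max_left _ _)
                exact_mod_cast this
          · calc 4 * Real.log n ≤ (⌈4 * Real.log n⌉₊ : ℝ) := Nat.le_ceil _
              _ ≤ ((s n : ℕ) : ℝ) := by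
                have : ⌈4 * Real.log n⌉₊ ≤ s n := by
                  simp only [hs]
                  exact Nat.le_succ_of_le (le_max_right _ _)
                exact_mod_cast this
          · exact hspos n
          · exact hgn
        calc ENNReal.ofReal ((n.choose (s n) : ℝ) * (δ n) ^ (s n) * (n : ℝ) ^ 2)
            ≤ ENNReal.ofReal 1 := ENNReal.ofReal_le_ofReal hkey
          _ = 1 := ENNReal.ofReal_one
      refine le_trans (measure_mono hincl) ?_
      refine le_trans (measure_union_le _ _) ?_
      rw [hBad0, zero_add]
      exact le_trans hA'bound hfinal
    · -- event is empty
      have hempty : {ω : Fin n → X | ∃ N : Finset X,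
            (↑N ⊆ Set.range ω) ∧
            (∀ a ∈ N, ∀ b ∈ N, a ≠ b → γ ≤ dist a b) ∧
            (∀ x ∈ Set.range ω, ∃ a ∈ N, dist x a < γ) ∧
            t n ≤ 2 * (N.card : ℝ)} = ∅ := by
        ext ω
        simp only [Set.mem_setOf_eq, Set.mem_empty_iff_false, iff_false, not_exists]
        rintro N ⟨hsub, -, -, hcard⟩
        have h1 : N.card ≤ n := gns_card_le hsub
        have h2 : t n = 2 * n + 2 := by simp [ht, hgn]
        rw [h2] at hcard
        have : (N.card : ℝ) ≤ n := by exact_mod_cast h1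
        linarith
      rw [hempty]
      simp
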